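/- Let a > 0, τ > 0, and let N ≥ 2 be an integer. Then the following identity holds: (1/π)·Σ_{n = p^{2k+1}, p ≤ N, k ≥ 0} (−1)^k · (Λ₁(n)/√n)·K̂_a(τ·ln n) = (1/π)·∫_0^{+∞} K_a(u)·S_N(u) du, where the sum on the left ranges over all odd powers n = p^{2k+1} of primes p ≤ N, and S_N(u) = Σ_{p ≤ N} arctan((2√p/(p−1))·cos(u·τ·ln p)). -/

import Mathlib

open Real MeasureTheory Complex

lemma integrable_Ka {a : ℝ} (ha : 0 < a) :
    Integrable (fun x : ℝ => Real.exp (-a * Real.cosh x)) := by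
  have habs : Integrable (fun x : ℝ => Real.exp (-a * |x|)) := by
    have h1 : IntegrableOn (fun x : ℝ => Real.exp (-a * |x|)) (Set.Ioi 0) := by
      refine (exp_neg_integrableOn_Ioi 0 ha).congr_fun ?_ measurableSet_Ioi
      intro x hx
      simp [abs_of_pos (show (0:ℝ) < x from hx)]
    have h2 : IntegrableOn (fun x : ℝ => Real.exp (-a * |x|)) (Set.Iio 0) := by
      have := (MeasurePreserving.integrableOn_comp_preimage
        (Measure.measurePreserving_neg (volume : Measure ℝ))
        (Homeomorph.neg ℝ).measurableEmbedding).2 h1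
      simp only [Function.comp_def, abs_neg] at this ⊢
      convert this using 2
      simp [Set.ext_iff]
    rw [← integrableOn_univ, ← Set.Iio_union_Ici (a := (0:ℝ)), integrableOn_union,
      integrableOn_Ici_iff_integrableOn_Ioi]
    exact ⟨h2, h1⟩
  refine habs.mono ?_ ?_
  · exact (Real.continuous_exp.comp (continuous_const.mul Real.continuous_cosh)).aestronglyMeasurable
  · filter_upwards with x
    rw [Real.norm_eq_abs, Real.norm_eq_abs, Real.abs_exp, Real.abs_exp, Real.exp_le_exp]
    have h : |x| ≤ Real.cosh x := by
      have := Real.self_le_sinh_iff.mpr (abs_nonneg x)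
      calc |x| ≤ Real.sinh |x| := this
        _ ≤ Real.cosh |x| := (Real.sinh_lt_cosh _).le
        _ = Real.cosh x := Real.cosh_abs x
    nlinarith

/-- `K_a(z) = exp(-a cosh z)` for complex `z`. -/
noncomputable def KaC (a : ℝ) (z : ℂ) : ℂ := Complex.exp (-(a : ℂ) * Complex.cosh z)

/-- The Fourier transform `K̂_a(u) = ∫ K_a(x) e^{-iux} dx`. -/
noncomputable def Khat (a : ℝ) (u : ℝ) : ℂ :=
  ∫ x : ℝ, KaC a (x : ℂ) * Complex.exp (-Complex.I * (u * x))

lemma KaC_ofReal (a x : ℝ) : KaC a (x : ℂ) = ((Real.exp (-a * Real.cosh x) : ℝ) : ℂ) := by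
  rw [KaC, ← Complex.ofReal_cosh, Complex.ofReal_exp, Complex.ofReal_mul, Complex.ofReal_neg]

lemma integrable_Khat {a : ℝ} (ha : 0 < a) (v : ℝ) :
    Integrable (fun x : ℝ => KaC a (x : ℂ) * Complex.exp (-Complex.I * (v * x))) := by
  refine (integrable_Ka ha).mono ?_ ?_
  · apply Continuous.aestronglyMeasurable
    fun_prop [KaC]
  · filter_upwards with x
    rw [norm_mul, KaC_ofReal]
    simp only [Complex.norm_real, Complex.norm_exp]
    rw [Real.norm_eq_abs, Real.abs_exp]
    have : (-Complex.I * (v * x)).re = 0 := by simp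
    rw [this, Real.exp_zero, mul_one]

lemma Khat_re {a : ℝ} (ha : 0 < a) (v : ℝ) :
    (Khat a v).re = ∫ x : ℝ, Real.exp (-a * Real.cosh x) * Real.cos (v * x) := by
  rw [Khat, ← RCLike.re_eq_complex_re, ← integral_re (integrable_Khat ha v)]
  congr 1
  ext x
  rw [RCLike.re_eq_complex_re, KaC_ofReal]
  simp [Complex.mul_re, Complex.exp_re, Complex.exp_im, Real.cos_neg, mul_comm]


lemma re_arctan {z : ℂ} (hz : ‖z‖ < 1) :
    (Complex.arctan z).re = Real.arctan (2 * z.re / (1 - Complex.normSq z)) / 2 := by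
  have hnz : Complex.normSq z < 1 := by
    rw [Complex.normSq_eq_norm_sq]; nlinarith [norm_nonneg z]
  set d : ℂ := 1 - z * I with hd
  have hdne : d ≠ 0 := by
    intro h
    have : ‖z * I‖ = 1 := by
      have : z * I = 1 := by rw [hd] at h; linear_combination -h
      rw [this, norm_one]
    rw [norm_mul, Complex.norm_I, mul_one] at this
    exact absurd this (ne_of_lt hz)
  have hD : 0 < Complex.normSq d := Complex.normSq_pos.mpr hdne
  set w : ℂ := (1 + z * I) / d with hw
  have hwre : w.re = (1 - Complex.normSq z) / Complex.normSq d := by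
    rw [hw, Complex.div_re]
    simp [hd, Complex.normSq_apply]
    ring
  have hwim : w.im = 2 * z.re / Complex.normSq d := by
    rw [hw, Complex.div_im]
    simp [hd, Complex.normSq_apply]
    ring
  have hwrepos : 0 < w.re := by
    rw [hwre]
    exact div_pos (by linarith) hD
  have harg : Complex.arg w = Real.arctan (w.im / w.re) := by
    have hb : |Complex.arg w| < π / 2 :=
      Complex.abs_arg_lt_pi_div_two_iff.mpr (Or.inl hwrepos)
    rw [← Complex.tan_arg, Real.arctan_tan (neg_lt_of_abs_lt hb) (lt_of_abs_lt hb)]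
  have hq : w.im / w.re = 2 * z.re / (1 - Complex.normSq z) := by
    rw [hwre, hwim]
    field_simp
  rw [Complex.arctan, Complex.mul_re]
  have h1 : (-I / 2).re = 0 := by simp
  have h2 : (-I / 2).im = -(1 / 2) := by norm_num
  rw [h1, h2, Complex.log_im, ← hw, harg, hq]
  ring

lemma hasSum_cos_arctan {x : ℝ} (θ : ℝ) (h0 : 0 ≤ x) (hx : x < 1) :
    HasSum (fun k : ℕ => (-1) ^ k * x ^ (2 * k + 1) / (2 * k + 1) * Real.cos ((2 * k + 1) * θ))
      (Real.arctan (2 * x * Real.cos θ / (1 - x ^ 2)) / 2) := by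
  set z : ℂ := (x : ℂ) * Complex.exp (θ * I) with hzdef
  have habs : ‖z‖ = x := by
    rw [hzdef, norm_mul, Complex.norm_real, Real.norm_eq_abs, _root_.abs_of_nonneg h0, Complex.norm_exp]
    simp
  have hz : ‖z‖ < 1 := by rw [habs]; exact hx
  have h := (Complex.hasSum_arctan hz).mapL Complex.reCLM
  have hre : z.re = x * Real.cos θ := by
    rw [hzdef, Complex.mul_re]
    simp [Complex.exp_ofReal_mul_I_re]
  have hsq : Complex.normSq z = x ^ 2 := by
    rw [Complex.normSq_eq_norm_sq, habs]
  have hval : Complex.reCLM (Complex.arctan z)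
      = Real.arctan (2 * x * Real.cos θ / (1 - x ^ 2)) / 2 := by
    have := re_arctan (habs ▸ hx)
    simpa [hre, hsq, mul_assoc] using this
  rw [hval] at h
  convert h using 2 with k
  have hterm : (-1 : ℂ) ^ k * z ^ (2 * k + 1) / ((2 * k + 1 : ℕ) : ℂ)
      = (((-1 : ℝ) ^ k * x ^ (2 * k + 1) / ((2 * k + 1 : ℕ) : ℝ) : ℝ) : ℂ)
        * Complex.exp ((((2 * k + 1 : ℕ) : ℝ) * θ : ℝ) * I) := by
    rw [hzdef, mul_pow, ← Complex.exp_nat_mul]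
    push_cast
    rw [show ((2 * (k : ℂ) + 1) * (↑θ * I)) = ((2 * (k : ℂ) + 1) * ↑θ) * I by ring]
    ring
  rw [Complex.reCLM_apply, hterm, Complex.re_ofReal_mul, Complex.exp_ofReal_mul_I_re]
  push_cast
  ring

/-- `S_N(u) = Σ_{p ≤ N prime} arctan((2√p/(p−1)) cos(uτ log p))`. -/
noncomputable def SN (N : ℕ) (τ : ℝ) (u : ℝ) : ℝ :=
  ∑ p ∈ Finset.filter Nat.Prime (Finset.Iic N),
    Real.arctan ((2 * Real.sqrt p / ((p : ℝ) - 1)) * Real.cos (u * τ * Real.log p))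

lemma prime_term_eq (a τ : ℝ) (ha : 0 < a) (hτ : 0 < τ) {p : ℕ} (hp : p.Prime) :
    (∑' k : ℕ, (-1 : ℝ) ^ k *
        ((ArithmeticFunction.vonMangoldt (p ^ (2 * k + 1)) /
            Real.log (p ^ (2 * k + 1))) / Real.sqrt (p ^ (2 * k + 1))) *
        (Khat a (τ * Real.log (p ^ (2 * k + 1)))).re)
    = ∫ u in Set.Ioi (0 : ℝ), Real.exp (-a * Real.cosh u) *
        Real.arctan ((2 * Real.sqrt p / ((p : ℝ) - 1)) * Real.cos (u * τ * Real.log p)) := by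
  have hp1 : (1 : ℝ) < p := by exact_mod_cast hp.one_lt
  set s := Real.sqrt p with hs
  have hs1 : 1 < s := by
    rw [hs, show (1 : ℝ) = Real.sqrt 1 by simp]
    exact Real.sqrt_lt_sqrt (by norm_num) hp1
  have hs0 : 0 < s := lt_trans one_pos hs1
  have hsq : s ^ 2 = p := Real.sq_sqrt (by positivity)
  set x := s⁻¹ with hx
  have hx0 : 0 < x := inv_pos.mpr hs0
  have hx1 : x < 1 := by rw [hx]; exact inv_lt_one_of_one_lt₀ hs1
  have hlogp : 0 < Real.log p := Real.log_pos hp1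
  set L := τ * Real.log p with hL
  set c : ℕ → ℝ := fun k => (-1) ^ k * x ^ (2 * k + 1) / (2 * (k : ℝ) + 1) with hc
  set F : ℕ → ℝ → ℝ := fun k u =>
    c k * (Real.exp (-a * Real.cosh u) * Real.cos (((2 * (k : ℝ) + 1) * L) * u)) with hF
  -- Step 1: rewrite each term of the tsum
  have hterm : ∀ k : ℕ, (-1 : ℝ) ^ k *
        ((ArithmeticFunction.vonMangoldt (p ^ (2 * k + 1)) /
            Real.log (p ^ (2 * k + 1))) / Real.sqrt (p ^ (2 * k + 1))) *
        (Khat a (τ * Real.log (p ^ (2 * k + 1)))).re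
      = c k * (Khat a ((2 * (k : ℝ) + 1) * L)).re := by
    intro k
    have e2 : Real.log ((p : ℝ) ^ (2 * k + 1)) = (2 * (k : ℝ) + 1) * Real.log p := by
      rw [Real.log_pow]; push_cast; ring
    have e3 : Real.sqrt ((p : ℝ) ^ (2 * k + 1)) = s ^ (2 * k + 1) := by
      rw [← hsq, ← pow_mul, show 2 * (2 * k + 1) = (2 * k + 1) * 2 by ring, pow_mul,
        Real.sqrt_sq (by positivity)]
    have e4 : ArithmeticFunction.vonMangoldt (p ^ (2 * k + 1)) = Real.log p := by
      rw [ArithmeticFunction.vonMangoldt_apply_pow (by omega),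
        ArithmeticFunction.vonMangoldt_apply_prime hp]
    have e5 : τ * ((2 * (k : ℝ) + 1) * Real.log p) = (2 * (k : ℝ) + 1) * L := by
      rw [hL]; ring
    rw [e2, e3, e4, e5, hc]
    have h2k : (2 * (k : ℝ) + 1) ≠ 0 := by positivity
    have e6 : Real.log p / ((2 * (k : ℝ) + 1) * Real.log p) / s ^ (2 * k + 1)
        = x ^ (2 * k + 1) / (2 * (k : ℝ) + 1) := by
      rw [hx, inv_pow]
      field_simp
    rw [e6]
    ring
  -- Step 2: integrability
  have hgint : ∀ v : ℝ, Integrable (fun u : ℝ =>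
      Real.exp (-a * Real.cosh u) * Real.cos (v * u)) := by
    intro v
    refine (integrable_Ka ha).mono ?_ ?_
    · exact (by fun_prop : Continuous fun u : ℝ => Real.exp (-a * Real.cosh u) * Real.cos (v * u)).aestronglyMeasurable
    · filter_upwards with u
      rw [Real.norm_eq_abs, Real.norm_eq_abs, Real.abs_exp, abs_mul, Real.abs_exp]
      calc Real.exp (-a * Real.cosh u) * |Real.cos (v * u)|
          ≤ Real.exp (-a * Real.cosh u) * 1 := by
            gcongr; exact Real.abs_cos_le_one _
        _ = Real.exp (-a * Real.cosh u) := mul_one _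
  have hFint : ∀ k, Integrable (F k) := fun k => (hgint _).const_mul _
  -- Step 3: value of each integral
  have hIk : ∀ k, ∫ u : ℝ, F k u = c k * (Khat a ((2 * (k : ℝ) + 1) * L)).re := by
    intro k
    rw [hF]
    simp only []
    rw [integral_const_mul, Khat_re ha]
  -- Step 4: summability of integral norms
  have hxk : ∀ k : ℕ, |c k| ≤ x ^ (2 * k + 1) := by
    intro k
    have hceq : |c k| = x ^ (2 * k + 1) / (2 * (k : ℝ) + 1) := by
      rw [hc]
      simp only
      rw [abs_div, abs_mul, _root_.abs_pow, _root_.abs_pow, abs_neg, abs_one, one_pow, one_mul,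
        _root_.abs_of_pos hx0, _root_.abs_of_pos (show (0:ℝ) < 2 * (k : ℝ) + 1 by positivity)]
    rw [hceq]
    exact div_le_self (by positivity) (by linarith [Nat.cast_nonneg (α := ℝ) k])
  have hnorm : ∀ k, (∫ u : ℝ, ‖F k u‖) ≤ x ^ (2 * k + 1) * ∫ u : ℝ, Real.exp (-a * Real.cosh u) := by
    intro k
    rw [← integral_const_mul]
    refine integral_mono (hFint k).norm ((integrable_Ka ha).const_mul _) ?_
    intro u
    simp only [hF, Real.norm_eq_abs, abs_mul, Real.abs_exp]
    calc |c k| * (Real.exp (-a * Real.cosh u) * |Real.cos ((2 * (k : ℝ) + 1) * L * u)|)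
        ≤ x ^ (2 * k + 1) * (Real.exp (-a * Real.cosh u) * 1) := by
          gcongr
          · exact hxk k
          · exact Real.abs_cos_le_one _
      _ = x ^ (2 * k + 1) * Real.exp (-a * Real.cosh u) := by ring
  have hsum : Summable fun k => ∫ u : ℝ, ‖F k u‖ := by
    refine Summable.of_nonneg_of_le (fun k => integral_nonneg fun u => norm_nonneg _) hnorm ?_
    apply Summable.mul_right
    have hgeo : Summable (fun k : ℕ => x * (x ^ 2) ^ k) :=
      (summable_geometric_of_lt_one (by positivity) (by nlinarith)).mul_left x
    refine hgeo.congr fun k => ?_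
    rw [← pow_mul, ← pow_succ']
  -- Step 5: swap sum and integral
  have hswap := MeasureTheory.integral_tsum_of_summable_integral_norm hFint hsum
  -- Step 6: pointwise sum
  have hpt : ∀ u : ℝ, (∑' k, F k u) = Real.exp (-a * Real.cosh u) *
      (Real.arctan ((2 * s / ((p : ℝ) - 1)) * Real.cos (u * τ * Real.log p)) / 2) := by
    intro u
    have h := (hasSum_cos_arctan (u * τ * Real.log p) hx0.le hx1).mul_left
      (Real.exp (-a * Real.cosh u))
    have harg : 2 * x * Real.cos (u * τ * Real.log p) / (1 - x ^ 2)
        = 2 * s / ((p : ℝ) - 1) * Real.cos (u * τ * Real.log p) := by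
      rw [hx, ← hsq]
      have hs2 : (0:ℝ) < s ^ 2 - 1 := by nlinarith
      have h1 : s ≠ 0 := hs0.ne'
      have h2 : s ^ 2 - 1 ≠ 0 := hs2.ne'
      have h3 : 1 - (s⁻¹) ^ 2 ≠ 0 := by
        have : (1 : ℝ) - (s⁻¹) ^ 2 = (s ^ 2 - 1) / s ^ 2 := by field_simp
        rw [this]
        positivity
      field_simp
    have ht : ∀ k : ℕ, F k u = Real.exp (-a * Real.cosh u) *
        ((-1) ^ k * x ^ (2 * k + 1) / (2 * (k : ℝ) + 1) * Real.cos ((2 * (k : ℝ) + 1) * (u * τ * Real.log p))) := by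
      intro k
      simp only [hF, hc]
      rw [show (2 * (k : ℝ) + 1) * L * u = (2 * (k : ℝ) + 1) * (u * τ * Real.log p) by
        rw [hL]; ring]
      ring
    calc (∑' k, F k u) = ∑' k : ℕ, Real.exp (-a * Real.cosh u) *
          ((-1) ^ k * x ^ (2 * k + 1) / (2 * (k : ℝ) + 1) *
            Real.cos ((2 * (k : ℝ) + 1) * (u * τ * Real.log p))) := tsum_congr ht
      _ = Real.exp (-a * Real.cosh u) *
          (Real.arctan (2 * x * Real.cos (u * τ * Real.log p) / (1 - x ^ 2)) / 2) := h.tsum_eq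
      _ = _ := by rw [harg]
  -- Step 7: evenness and halving
  set G : ℝ → ℝ := fun u => Real.exp (-a * Real.cosh u) *
      (Real.arctan ((2 * s / ((p : ℝ) - 1)) * Real.cos (u * τ * Real.log p)) / 2) with hG
  have hGint : Integrable G := by
    refine ((integrable_Ka ha).const_mul π).mono ?_ ?_
    · refine Continuous.aestronglyMeasurable ?_
      exact (Real.continuous_exp.comp (continuous_const.mul Real.continuous_cosh)).mul
        ((Real.continuous_arctan.comp (continuous_const.mul (Real.continuous_cos.comp
          ((continuous_id.mul continuous_const).mul continuous_const)))).div_const 2)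
    · filter_upwards with u
      simp only [hG, Real.norm_eq_abs, abs_mul, Real.abs_exp]
      have h1 : |Real.arctan ((2 * s / ((p : ℝ) - 1)) * Real.cos (u * τ * Real.log p)) / 2| ≤ π := by
        rw [abs_div, _root_.abs_of_pos (by norm_num : (0:ℝ) < 2)]
        have h2 : |Real.arctan ((2 * s / ((p : ℝ) - 1)) * Real.cos (u * τ * Real.log p))| ≤ π / 2 :=
          (abs_lt.mpr ⟨Real.neg_pi_div_two_lt_arctan _, Real.arctan_lt_pi_div_two _⟩).le
        nlinarith [Real.pi_pos]
      calc Real.exp (-a * Real.cosh u) * |Real.arctan _ / 2|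
          ≤ Real.exp (-a * Real.cosh u) * π := by gcongr
        _ ≤ |π| * Real.exp (-a * Real.cosh u) := by
            rw [abs_of_pos Real.pi_pos]; ring_nf; exact le_rfl
  have heven : ∀ u, G (-u) = G u := by
    intro u
    simp only [hG]
    rw [show -u * τ * Real.log p = -(u * τ * Real.log p) by ring, Real.cos_neg, Real.cosh_neg]
  have hsplit : (∫ u : ℝ, G u) = 2 * ∫ u in Set.Ioi (0:ℝ), G u := by
    rw [← intervalIntegral.integral_Iic_add_Ioi (b := (0:ℝ)) hGint.integrableOn hGint.integrableOn]
    have h2 : (∫ u in Set.Iic (0:ℝ), G (-u)) = ∫ u in Set.Iic (0:ℝ), G u := by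
      simp only [heven]
    rw [← h2, integral_comp_neg_Iic, neg_zero]
    ring
  -- Final assembly
  refine (tsum_congr fun k => (hterm k).trans (hIk k).symm).trans ?_
  rw [hswap, integral_congr_ae (Filter.Eventually.of_forall hpt), hsplit, ← integral_const_mul]
  exact integral_congr_ae (Filter.Eventually.of_forall fun u => by simp only [hG]; ring)

lemma integrable_exp_mul_bounded {a : ℝ} (ha : 0 < a) {g : ℝ → ℝ} (hg : Continuous g)
    (hb : ∀ u, |g u| ≤ π) :
    Integrable (fun u : ℝ => Real.exp (-a * Real.cosh u) * g u) := by
  refine ((integrable_Ka ha).const_mul π).mono ?_ ?_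
  · exact ((Real.continuous_exp.comp (continuous_const.mul Real.continuous_cosh)).mul
      hg).aestronglyMeasurable
  · filter_upwards with u
    rw [Real.norm_eq_abs, Real.norm_eq_abs, abs_mul, abs_mul, Real.abs_exp,
      _root_.abs_of_pos Real.pi_pos]
    calc Real.exp (-a * Real.cosh u) * |g u| ≤ Real.exp (-a * Real.cosh u) * π := by
          gcongr; exact hb u
      _ = π * Real.exp (-a * Real.cosh u) := by ring

/-- For `a, τ > 0` and an integer `N ≥ 2`,
`(1/π) Σ_{n = p^{2k+1}, p ≤ N, k ≥ 0} (−1)^k (Λ₁(n)/√n) K̂_a(τ log n)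
  = (1/π) ∫_0^∞ K_a(u) S_N(u) du`. -/
theorem odd_prime_power_sum_eq_integral (a τ : ℝ) (ha : 0 < a) (hτ : 0 < τ)
    (N : ℕ) (hN : 2 ≤ N) :
    (1 / π) * ∑ p ∈ Finset.filter Nat.Prime (Finset.Iic N), ∑' k : ℕ,
      (-1 : ℝ) ^ k *
        ((ArithmeticFunction.vonMangoldt (p ^ (2 * k + 1)) /
            Real.log (p ^ (2 * k + 1))) / Real.sqrt (p ^ (2 * k + 1))) *
        (Khat a (τ * Real.log (p ^ (2 * k + 1)))).re =
    (1 / π) * ∫ u in Set.Ioi (0 : ℝ), Real.exp (-a * Real.cosh u) * SN N τ u := by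
  congr 1
  have h1 : (∫ u in Set.Ioi (0:ℝ), Real.exp (-a * Real.cosh u) * SN N τ u)
      = ∑ p ∈ Finset.filter Nat.Prime (Finset.Iic N), ∫ u in Set.Ioi (0:ℝ),
          Real.exp (-a * Real.cosh u) *
            Real.arctan ((2 * Real.sqrt p / ((p : ℝ) - 1)) * Real.cos (u * τ * Real.log p)) := by
    simp_rw [SN, Finset.mul_sum]
    refine integral_finset_sum _ fun q hq => ?_
    refine (integrable_exp_mul_bounded ha ?_ ?_).integrableOn
    · exact Real.continuous_arctan.comp (continuous_const.mul (Real.continuous_cos.comp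
        ((continuous_id.mul continuous_const).mul continuous_const)))
    · intro u
      have := abs_lt.mpr ⟨Real.neg_pi_div_two_lt_arctan
        ((2 * Real.sqrt q / ((q : ℝ) - 1)) * Real.cos (u * τ * Real.log q)),
        Real.arctan_lt_pi_div_two _⟩
      nlinarith [Real.pi_pos]
  rw [h1]
  exact Finset.sum_congr rfl fun p hp =>
    prime_term_eq a τ ha hτ (Finset.mem_filter.mp hp).2
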